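/- Let f be an entire function and f*(z) := conj(f(conj z)). Then |f(z)| > |f*(z)| for all z with Im z > μ if and only if w·f(z) + f*(z) ≠ 0 whenever |w| ≥ 1 and Im z > μ. -/

import Mathlib

open Complex

theorem stmt_3 (f : ℂ → ℂ) (hf : Differentiable ℂ f) (μ : ℝ) (hμ : 0 ≤ μ) :
    (∀ z : ℂ, μ < z.im →
        ‖(starRingEnd ℂ) (f ((starRingEnd ℂ) z))‖ < ‖f z‖) ↔
    (∀ w z : ℂ, 1 ≤ ‖w‖ → μ < z.im →
        w * f z + (starRingEnd ℂ) (f ((starRingEnd ℂ) z)) ≠ 0) := by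
  constructor
  · intro h w z hw hz heq
    have h1 := h z hz
    have h2 : (starRingEnd ℂ) (f ((starRingEnd ℂ) z)) = -(w * f z) := by
      linear_combination heq
    rw [h2, norm_neg, norm_mul] at h1
    nlinarith [norm_nonneg (f z)]
  · intro h z hz
    by_contra hle
    push_neg at hle
    have hfz : f z ≠ 0 := by
      intro hfz0
      have hst : (starRingEnd ℂ) (f ((starRingEnd ℂ) z)) ≠ 0 := by
        intro h0
        exact h 1 z (by simp) hz (by rw [hfz0, h0]; ring)
      have ha : AnalyticAt ℂ f z := hf.analyticAt z
      rcases ha.eventually_eq_zero_or_eventually_ne_zero with hev | hev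
      · have hall : ∀ x, f x = 0 := by
          have hA : AnalyticOnNhd ℂ f Set.univ := fun x _ => hf.analyticAt x
          have := hA.eqOn_zero_of_preconnected_of_eventuallyEq_zero
            isPreconnected_univ (Set.mem_univ z) hev
          intro x; exact this (Set.mem_univ x)
        exact hst (by simp [hall])
      · have him : ∀ᶠ x in nhdsWithin z {z}ᶜ, μ < x.im :=
          Filter.Eventually.filter_mono nhdsWithin_le_nhds
            ((Complex.continuous_im.continuousAt).eventually (eventually_gt_nhds hz))
        have habs : ∀ᶠ x in nhdsWithin z {z}ᶜ,
            ‖f x‖ < ‖(starRingEnd ℂ) (f ((starRingEnd ℂ) x))‖ := by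
          apply Filter.Eventually.filter_mono nhdsWithin_le_nhds
          have hc1 : ContinuousAt (fun x => ‖f x‖) z :=
            (continuous_norm.comp hf.continuous).continuousAt
          have hc2 : ContinuousAt (fun x => ‖(starRingEnd ℂ) (f ((starRingEnd ℂ) x))‖) z :=
            (continuous_norm.comp ((continuous_conj).comp
              (hf.continuous.comp continuous_conj))).continuousAt
          have hlt : ‖f z‖ < ‖(starRingEnd ℂ) (f ((starRingEnd ℂ) z))‖ := by
            rw [hfz0]; simpa using hst
          exact hc1.eventually_lt hc2 hlt
        obtain ⟨x, hx1, hx2, hx3⟩ := (hev.and (him.and habs)).exists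
        refine h (-(starRingEnd ℂ) (f ((starRingEnd ℂ) x)) / f x) x ?_ hx2 ?_
        · rw [norm_div, norm_neg, le_div_iff₀ (norm_pos_iff.mpr hx1)]
          linarith
        · rw [neg_div, neg_mul, div_mul_cancel₀ _ hx1]; ring
    refine h (-(starRingEnd ℂ) (f ((starRingEnd ℂ) z)) / f z) z ?_ hz ?_
    · rw [norm_div, norm_neg, le_div_iff₀ (norm_pos_iff.mpr hfz)]
      linarith
    · rw [neg_div, neg_mul, div_mul_cancel₀ _ hfz]; ring
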